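/- Let G_mod be the modified envy graph of allocation X defined via proxy valuations ṽ_i(Y) = v_i(Y) if |Y| = 1 and ṽ_i(Y) = (1/α)·v_i(Y) if |Y| > 1, with edge (i,j) iff ṽ_i(X_j) > ṽ_i(X_i). If every bundle update during an algorithm strictly increases ṽ_i(X_i) for updated agents and leaves other agents' bundles and proxies unchanged, then each call of CycleResolution on G_mod strictly decreases the total number of edges of G_mod; hence AllCyclesResolution terminates after at most n² calls. -/
import Mathlib


open Finset

noncomputable section
open scoped Classical

/-- Proxy valuation: `ṽ_i(Y) = v_i(Y)` if `|Y| = 1` and `(1/α)·v_i(Y)` otherwise. -/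
def proxy {ι G : Type*} (α : ℝ) (v : ι → G → ℝ) (i : ι) (Y : Finset G) : ℝ :=
  if Y.card = 1 then ∑ g ∈ Y, v i g else (1 / α) * ∑ g ∈ Y, v i g

/-- Edge set of the modified envy graph: `(i,j)` iff `ṽ_i(X_j) > ṽ_i(X_i)`. -/
def modEdges {ι G : Type*} [Fintype ι] (α : ℝ) (v : ι → G → ℝ)
    (X : ι → Finset G) : Finset (ι × ι) :=
  Finset.univ.filter (fun p => proxy α v p.1 (X p.1) < proxy α v p.1 (X p.2))

/-- resolving a (nontrivial) cycle of the modified envy graph — each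
cycle agent receives a bundle of strictly larger proxy value while the bundles are
permuted — strictly decreases the number of edges of the modified envy graph;
moreover the number of edges is at most `n²`, so AllCyclesResolution terminates
after at most `n²` calls. -/
theorem stmt15 {ι G : Type*} [Fintype ι] [DecidableEq ι] [DecidableEq G]
    (α : ℝ) (hα0 : 0 < α) (hα1 : α ≤ 1)
    (v : ι → G → ℝ) (X : ι → Finset G)
    (σ : Equiv.Perm ι) (hσ : σ ≠ 1)
    (henvy : ∀ i, σ i ≠ i → proxy α v i (X i) < proxy α v i (X (σ i))) :
    (modEdges α v (fun i => X (σ i))).card < (modEdges α v X).card ∧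
    (modEdges α v X).card ≤ (Fintype.card ι) ^ 2 := by
  classical
  set E' := modEdges α v (fun i => X (σ i)) with hE'
  set E := modEdges α v X with hE
  obtain ⟨i, hi⟩ : ∃ i, σ i ≠ i := by
    by_contra h
    push_neg at h
    exact hσ (Equiv.ext fun x => h x)
  have hfinj : Function.Injective (fun p : ι × ι => (p.1, σ p.2)) := by
    intro p q hpq
    simp only [Prod.mk.injEq] at hpq
    exact Prod.ext hpq.1 (σ.injective hpq.2)
  have hsub : E'.image (fun p : ι × ι => (p.1, σ p.2)) ⊆ E := by
    intro p hp
    simp only [Finset.mem_image] at hp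
    obtain ⟨q, hq, rfl⟩ := hp
    simp only [hE', hE, modEdges, Finset.mem_filter, Finset.mem_univ, true_and] at hq ⊢
    by_cases h1 : σ q.1 = q.1
    · rwa [h1] at hq
    · exact lt_trans (henvy q.1 h1) hq
  have hmem : (i, σ i) ∈ E := by
    simp only [hE, modEdges, Finset.mem_filter, Finset.mem_univ, true_and]
    exact henvy i hi
  have hnot : (i, σ i) ∉ E'.image (fun p : ι × ι => (p.1, σ p.2)) := by
    intro h
    simp only [Finset.mem_image] at h
    obtain ⟨q, hq, heq⟩ := h
    simp only [Prod.mk.injEq] at heq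
    obtain ⟨h1, h2⟩ := heq
    have h2' : q.2 = i := σ.injective h2
    simp only [hE', modEdges, Finset.mem_filter, Finset.mem_univ, true_and, h1, h2'] at hq
    exact lt_irrefl _ hq
  constructor
  · calc E'.card = (E'.image (fun p : ι × ι => (p.1, σ p.2))).card :=
          (Finset.card_image_of_injective _ hfinj).symm
      _ < E.card := Finset.card_lt_card (Finset.ssubset_iff_of_subset hsub |>.mpr
          ⟨(i, σ i), hmem, hnot⟩)
  · calc E.card ≤ (Finset.univ : Finset (ι × ι)).card :=
          Finset.card_le_card (Finset.subset_univ _)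
      _ = Fintype.card ι * Fintype.card ι := by simp [Fintype.card_prod]
      _ = (Fintype.card ι) ^ 2 := (sq _).symm

end
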